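/- Let A and B be the adjacency matrices of two isomorphic undirected unweighted graphs on p vertices with e edges and no self-loops, so that A = P₀ B P₀ᵀ for some p×p permutation matrix P₀. Then the minimum over the set 𝒟 of p×p doubly stochastic matrices of the objective f(P) = Σ_{i,j} ‖((AP)_{ij}, (PB)_{ij})‖₂ equals 2√2·e, and this minimum is attained at P₀. Moreover, every doubly stochastic matrix P achieving this minimum satisfies AP = PB. -/

import Mathlib

open Matrix BigOperators Finset

/-- `A` is the adjacency matrix of an undirected unweighted graph on `p` vertices
with `e` edges and no self-loops: symmetric, 0/1 entries, zero diagonal,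
and total entry sum `2 e`. -/
def IsAdjacencyMatrix {p : ℕ} (A : Matrix (Fin p) (Fin p) ℝ) (e : ℕ) : Prop :=
  Aᵀ = A ∧ (∀ i j, A i j = 0 ∨ A i j = 1) ∧ (∀ i, A i i = 0) ∧
    (∑ i, ∑ j, A i j) = 2 * e

/-- `P` is doubly stochastic: nonnegative entries, all row and column sums equal 1. -/
def IsDoublyStochastic {p : ℕ} (P : Matrix (Fin p) (Fin p) ℝ) : Prop :=
  (∀ i j, 0 ≤ P i j) ∧ (∀ i, ∑ j, P i j = 1) ∧ (∀ j, ∑ i, P i j = 1)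

/-- `P` is a permutation matrix: 0/1 entries with exactly one 1 in each row and column. -/
def IsPermMatrix {p : ℕ} (P : Matrix (Fin p) (Fin p) ℝ) : Prop :=
  (∀ i j, P i j = 0 ∨ P i j = 1) ∧ (∀ i, ∃! j, P i j = 1) ∧ (∀ j, ∃! i, P i j = 1)

/-- The group-lasso graph matching objective
`f(P) = ∑_{i,j} ‖((AP)_{ij}, (PB)_{ij})‖₂`. -/
noncomputable def glagObj {p : ℕ} (A B P : Matrix (Fin p) (Fin p) ℝ) : ℝ :=
  ∑ i, ∑ j, Real.sqrt (((A * P) i j) ^ 2 + ((P * B) i j) ^ 2)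

lemma aux_le (x y : ℝ) (hx : 0 ≤ x) (hy : 0 ≤ y) :
    (x + y) / Real.sqrt 2 ≤ Real.sqrt (x ^ 2 + y ^ 2) := by
  have h1 : (x + y) / Real.sqrt 2 = Real.sqrt ((x + y) ^ 2 / 2) := by
    rw [Real.sqrt_div (sq_nonneg _), Real.sqrt_sq (by linarith)]
  rw [h1]
  apply Real.sqrt_le_sqrt
  nlinarith [sq_nonneg (x - y)]

lemma aux_eq (x y : ℝ) (h : (x + y) / Real.sqrt 2 = Real.sqrt (x ^ 2 + y ^ 2)) : x = y := by
  have hs : Real.sqrt 2 * Real.sqrt 2 = 2 := Real.mul_self_sqrt (by norm_num)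
  have h2 : (x + y) ^ 2 / 2 = x ^ 2 + y ^ 2 := by
    have h' := congrArg (· ^ 2) h
    rw [Real.sq_sqrt (by positivity), div_pow] at h'
    rw [← h']
    congr 1
    rw [sq, hs]
  have h3 : (x - y) ^ 2 = 0 := by linear_combination (-2) * h2
  have h4 : x - y = 0 := sq_eq_zero_iff.mp h3
  linarith

lemma sum_mul_left {p : ℕ} {A P : Matrix (Fin p) (Fin p) ℝ} {e : ℕ}
    (hA : (∑ i, ∑ j, A i j) = 2 * e) (hP : ∀ i, ∑ j, P i j = 1) :
    ∑ i, ∑ j, (A * P) i j = 2 * e := by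
  have h : ∀ i, ∑ j, (A * P) i j = ∑ k, A i k := by
    intro i
    simp only [Matrix.mul_apply]
    rw [Finset.sum_comm]
    refine Finset.sum_congr rfl fun k _ => ?_
    rw [← Finset.mul_sum, hP k, mul_one]
  simp_rw [h]
  exact hA

lemma sum_mul_right {p : ℕ} {B P : Matrix (Fin p) (Fin p) ℝ} {e : ℕ}
    (hB : (∑ i, ∑ j, B i j) = 2 * e) (hP : ∀ j, ∑ i, P i j = 1) :
    ∑ i, ∑ j, (P * B) i j = 2 * e := by
  rw [show ∑ i, ∑ j, (P * B) i j = ∑ j, ∑ i, (P * B) i j from Finset.sum_comm]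
  have h : ∀ j, ∑ i, (P * B) i j = ∑ k, B k j := by
    intro j
    simp only [Matrix.mul_apply]
    rw [Finset.sum_comm]
    refine Finset.sum_congr rfl fun k _ => ?_
    rw [← Finset.sum_mul, hP k, one_mul]
  simp_rw [h]
  rw [Finset.sum_comm]
  exact hB

theorem stmt0 {p e : ℕ} (A B P₀ : Matrix (Fin p) (Fin p) ℝ)
    (hA : IsAdjacencyMatrix A e) (hB : IsAdjacencyMatrix B e)
    (hP₀ : IsPermMatrix P₀) (hAB : A = P₀ * B * P₀ᵀ) :
    (∀ P : Matrix (Fin p) (Fin p) ℝ, IsDoublyStochastic P →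
        2 * Real.sqrt 2 * e ≤ glagObj A B P) ∧
    IsDoublyStochastic P₀ ∧
    glagObj A B P₀ = 2 * Real.sqrt 2 * e ∧
    (∀ P : Matrix (Fin p) (Fin p) ℝ, IsDoublyStochastic P →
        glagObj A B P = 2 * Real.sqrt 2 * e → A * P = P * B) := by
  obtain ⟨hAsymm, hA01, hAdiag, hAsum⟩ := hA
  obtain ⟨hBsymm, hB01, hBdiag, hBsum⟩ := hB
  obtain ⟨hP01, hProw, hPcol⟩ := hP₀
  have hAnn : ∀ i j, 0 ≤ A i j := fun i j => by rcases hA01 i j with h | h <;> simp [h]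
  have hBnn : ∀ i j, 0 ≤ B i j := fun i j => by rcases hB01 i j with h | h <;> simp [h]
  have hs2 : Real.sqrt 2 * Real.sqrt 2 = 2 := Real.mul_self_sqrt (by norm_num)
  have hs2pos : (0:ℝ) < Real.sqrt 2 := Real.sqrt_pos.mpr (by norm_num)
  -- P₀ doubly stochastic
  have hP₀nn : ∀ i j, 0 ≤ P₀ i j := fun i j => by rcases hP01 i j with h | h <;> simp [h]
  have hProwsum : ∀ i, ∑ j, P₀ i j = 1 := by
    intro i
    obtain ⟨j₀, hj₀, hu⟩ := hProw i
    rw [Finset.sum_eq_single j₀]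
    · exact hj₀
    · intro j _ hne
      rcases hP01 i j with h | h
      · exact h
      · exact absurd (hu j h) hne
    · intro h; exact absurd (Finset.mem_univ j₀) h
  have hPcolsum : ∀ j, ∑ i, P₀ i j = 1 := by
    intro j
    obtain ⟨i₀, hi₀, hu⟩ := hPcol j
    rw [Finset.sum_eq_single i₀]
    · exact hi₀
    · intro i _ hne
      rcases hP01 i j with h | h
      · exact h
      · exact absurd (hu i h) hne
    · intro h; exact absurd (Finset.mem_univ i₀) h
  have hP₀DS : IsDoublyStochastic P₀ := ⟨hP₀nn, hProwsum, hPcolsum⟩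
  -- P₀ᵀ * P₀ = 1
  have hI : P₀ᵀ * P₀ = 1 := by
    ext j j'
    rw [Matrix.mul_apply]
    by_cases h : j = j'
    · subst h
      rw [Matrix.one_apply_eq]
      have hd : ∀ i, P₀ᵀ j i * P₀ i j = P₀ i j := fun i => by
        rcases hP01 i j with h | h <;> simp [Matrix.transpose_apply, h]
      simp_rw [hd]
      exact hPcolsum j
    · rw [Matrix.one_apply_ne h]
      apply Finset.sum_eq_zero
      intro i _
      rcases hP01 i j with h1 | h1
      · simp [Matrix.transpose_apply, h1]
      · rcases hP01 i j' with h2 | h2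
        · simp [h2]
        · obtain ⟨j₀, _, hu⟩ := hProw i
          exact absurd ((hu j h1).trans (hu j' h2).symm) h
  have hAP₀ : A * P₀ = P₀ * B := by
    rw [hAB, Matrix.mul_assoc (P₀ * B) P₀ᵀ P₀, hI, Matrix.mul_one]
  -- nonnegativity of products
  have hAPnn : ∀ (P : Matrix (Fin p) (Fin p) ℝ), (∀ i j, 0 ≤ P i j) →
      ∀ i j, 0 ≤ (A * P) i j := by
    intro P hP i j
    rw [Matrix.mul_apply]
    exact Finset.sum_nonneg fun k _ => mul_nonneg (hAnn i k) (hP k j)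
  have hPBnn : ∀ (P : Matrix (Fin p) (Fin p) ℝ), (∀ i j, 0 ≤ P i j) →
      ∀ i j, 0 ≤ (P * B) i j := by
    intro P hP i j
    rw [Matrix.mul_apply]
    exact Finset.sum_nonneg fun k _ => mul_nonneg (hP i k) (hBnn k j)
  -- the value of the lower bound sum
  have hlbsum : ∀ (P : Matrix (Fin p) (Fin p) ℝ), IsDoublyStochastic P →
      ∑ i, ∑ j, ((A * P) i j + (P * B) i j) / Real.sqrt 2 = 2 * Real.sqrt 2 * e := by
    intro P hP
    have h1 : ∑ i, ∑ j, ((A * P) i j + (P * B) i j) / Real.sqrt 2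
        = ((∑ i, ∑ j, (A * P) i j) + ∑ i, ∑ j, (P * B) i j) / Real.sqrt 2 := by
      simp [div_eq_mul_inv, add_mul, Finset.sum_add_distrib, Finset.sum_mul]
    rw [h1, sum_mul_left hAsum hP.2.1, sum_mul_right hBsum hP.2.2,
      div_eq_iff (ne_of_gt hs2pos)]
    linear_combination (-2) * (e : ℝ) * hs2
  -- lower bound
  have hLB : ∀ P : Matrix (Fin p) (Fin p) ℝ, IsDoublyStochastic P →
      2 * Real.sqrt 2 * e ≤ glagObj A B P := by
    intro P hP
    rw [← hlbsum P hP]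
    unfold glagObj
    refine Finset.sum_le_sum fun i _ => Finset.sum_le_sum fun j _ => ?_
    exact aux_le _ _ (hAPnn P hP.1 i j) (hPBnn P hP.1 i j)
  refine ⟨hLB, hP₀DS, ?_, ?_⟩
  · -- value at P₀
    unfold glagObj
    have hterm : ∀ i j, Real.sqrt (((A * P₀) i j) ^ 2 + ((P₀ * B) i j) ^ 2)
        = Real.sqrt 2 * (A * P₀) i j := by
      intro i j
      rw [← hAP₀]
      rw [show ((A * P₀) i j) ^ 2 + ((A * P₀) i j) ^ 2 = 2 * ((A * P₀) i j) ^ 2 by ring,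
        Real.sqrt_mul (by norm_num), Real.sqrt_sq (hAPnn P₀ hP₀nn i j)]
    simp_rw [hterm, ← Finset.mul_sum]
    rw [sum_mul_left hAsum hProwsum]
    ring
  · -- equality case
    intro P hP heq
    have hle : ∀ z : Fin p × Fin p,
        ((A * P) z.1 z.2 + (P * B) z.1 z.2) / Real.sqrt 2
          ≤ Real.sqrt (((A * P) z.1 z.2) ^ 2 + ((P * B) z.1 z.2) ^ 2) :=
      fun z => aux_le _ _ (hAPnn P hP.1 z.1 z.2) (hPBnn P hP.1 z.1 z.2)
    have hsums : ∑ z : Fin p × Fin p, ((A * P) z.1 z.2 + (P * B) z.1 z.2) / Real.sqrt 2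
        = ∑ z : Fin p × Fin p,
            Real.sqrt (((A * P) z.1 z.2) ^ 2 + ((P * B) z.1 z.2) ^ 2) := by
      rw [Fintype.sum_prod_type, Fintype.sum_prod_type]
      rw [hlbsum P hP]
      have : glagObj A B P = ∑ i, ∑ j,
          Real.sqrt (((A * P) i j) ^ 2 + ((P * B) i j) ^ 2) := rfl
      rw [← this, heq]
    have hpt := (Finset.sum_eq_sum_iff_of_le (fun z _ => hle z)).mp hsums
    ext i j
    exact aux_eq _ _ (hpt (i, j) (Finset.mem_univ _))
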